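/- Let (D : I → Vocab, L) be a labeled diagram (L assigns to each node a name or the empty list) that is name-clash-free in the labeled sense. Then the set sel(D,L) := { Nam(X) | X ∈ Sym(D,L)/∼_{DL} } is a vocabulary (its elements are pairwise disjoint sets of qualified names), the maps μ_i : D(i) → sel(D,L) given by μ_i([x]_{D(i)}) = [L(i)/x]_{sel(D,L)} are well-defined functions, and (sel(D,L), (μ_i)) is a colimit cocone of D in Vocab. -/

import Mathlib

open CategoryTheory CategoryTheory.Limits

/-- A vocabulary: a set of pairwise disjoint nonempty structured symbols (sets of
qualified names). -/
def IsVocab {Name : Type} (V : Set (Set (List Name))) : Prop :=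
  (∀ S ∈ V, S.Nonempty) ∧ V.PairwiseDisjoint id

/-- The type of vocabularies over `Name`. -/
abbrev Voc (Name : Type) : Type := {V : Set (Set (List Name)) // IsVocab V}

/-- The category `Vocab`: the full subcategory of `Set` on the vocabularies. -/
abbrev VocCat (Name : Type) : Type :=
  InducedCategory (Type) (fun V : Voc Name => ↥V.1)

variable {Name : Type} {I : Type} [Category.{0} I]

/-- The symbols of a labeled diagram `(D, L)`:
pairs `(i, L(i)/x)` with `x ∈ dom(D(i))`. -/
def LSym (D : I ⥤ VocCat Name) (L : I → List Name) : Type :=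
  {p : I × List Name // ∃ (x : List Name) (S : Set (List Name)),
    S ∈ (D.obj p.1).1 ∧ x ∈ S ∧ p.2 = L p.1 ++ x}

/-- The relation `≤_{DL}` on the symbols of a labeled diagram:
`(i, L(i)/x) ≤_{DL} (j, L(j)/y)` if for some `m : i ⟶ j`, `D(m)(S) = T` with
`x ∈ S ∈ D(i)` and `y ∈ T ∈ D(j)`. The equivalence relation `∼_{DL}` is the one it
generates, so `Sym(D,L)/∼_{DL}` is `Quot (LRel D L)`. -/
def LRel (D : I ⥤ VocCat Name) (L : I → List Name) (p q : LSym D L) : Prop :=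
  ∃ (m : p.1.1 ⟶ q.1.1) (S : Set (List Name)) (hS : S ∈ (D.obj p.1.1).1)
    (x : List Name), x ∈ S ∧ p.1.2 = L p.1.1 ++ x ∧
      ∃ y : List Name, y ∈ (D.map m ⟨S, hS⟩ : Set (List Name)) ∧ q.1.2 = L q.1.1 ++ y

/-- The name set `Nam(X) = {q | (i,q) ∈ X}` of a class `X ∈ Sym(D,L)/∼_{DL}`. -/
def LNam (D : I ⥤ VocCat Name) (L : I → List Name) (X : Quot (LRel D L)) :
    Set (List Name) :=
  {n | ∃ p : LSym D L, Quot.mk (LRel D L) p = X ∧ p.1.2 = n}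

/-- The selected colimit vocabulary `sel(D,L) = { Nam(X) | X ∈ Sym(D,L)/∼_{DL} }`. -/
def LSel (D : I ⥤ VocCat Name) (L : I → List Name) : Set (Set (List Name)) :=
  Set.range (LNam D L)

section LabeledAux

variable {Name : Type} {I : Type} [Category.{0} I]

lemma vocab_eq_of_mem {V : Set (Set (List Name))} (hV : IsVocab V) {S T : Set (List Name)}
    (hS : S ∈ V) (hT : T ∈ V) {x : List Name} (hxS : x ∈ S) (hxT : x ∈ T) : S = T := by
  by_contra hne
  exact Set.disjoint_left.mp (hV.2 hS hT hne) hxS hxT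

lemma lnam_nonempty (D : I ⥤ VocCat Name) (L : I → List Name) (X : Quot (LRel D L)) :
    (LNam D L X).Nonempty := by
  obtain ⟨p, rfl⟩ := Quot.exists_rep X
  exact ⟨p.1.2, p, rfl, rfl⟩

lemma lnam_inj {D : I ⥤ VocCat Name} {L : I → List Name}
    (hncf : ∀ X Y : Quot (LRel D L), X ≠ Y → Disjoint (LNam D L X) (LNam D L Y))
    {X Y : Quot (LRel D L)} (h : LNam D L X = LNam D L Y) : X = Y := by
  by_contra hne
  obtain ⟨n, hn⟩ := lnam_nonempty D L X
  exact Set.disjoint_left.mp (hncf X Y hne) hn (h ▸ hn)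

lemma mk_eq_of_same (D : I ⥤ VocCat Name) (L : I → List Name)
    {i : I} {S : Set (List Name)} (hS : S ∈ (D.obj i).1) {x y : List Name}
    (hx : x ∈ S) (hy : y ∈ S) :
    Quot.mk (LRel D L) ⟨(i, L i ++ x), ⟨x, S, hS, hx, rfl⟩⟩ =
      Quot.mk (LRel D L) ⟨(i, L i ++ y), ⟨y, S, hS, hy, rfl⟩⟩ := by
  apply Quot.sound
  refine ⟨𝟙 i, S, hS, x, hx, rfl, y, ?_, rfl⟩
  rw [D.map_id]
  exact hy

/-- A canonical symbol of `(D, L)` from data. -/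
def lsym (D : I ⥤ VocCat Name) (L : I → List Name) (i : I) {S : Set (List Name)}
    (hS : S ∈ (D.obj i).1) {x : List Name} (hx : x ∈ S) : LSym D L :=
  ⟨(i, L i ++ x), ⟨x, S, hS, hx, rfl⟩⟩

/-- The maps `μ_i : D(i) → sel(D,L)`. -/
noncomputable def lmu (D : I ⥤ VocCat Name) (L : I → List Name) (i : I)
    (s : ↥(D.obj i).1) : ↥(LSel D L) :=
  ⟨LNam D L (Quot.mk (LRel D L)
      (lsym D L i s.2 ((D.obj i).2.1 s.1 s.2).choose_spec)), ⟨_, rfl⟩⟩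

lemma lmu_spec (D : I ⥤ VocCat Name) (L : I → List Name) (i : I)
    {S : Set (List Name)} (hS : S ∈ (D.obj i).1) {x : List Name} (hx : x ∈ S) :
    (lmu D L i ⟨S, hS⟩ : Set (List Name)) =
      LNam D L (Quot.mk (LRel D L) (lsym D L i hS hx)) :=
  congrArg (LNam D L) (mk_eq_of_same D L hS ((D.obj i).2.1 S hS).choose_spec hx)

lemma lmu_natural (D : I ⥤ VocCat Name) (L : I → List Name) {i j : I} (m : i ⟶ j)
    (s : ↥(D.obj i).1) : lmu D L j (D.map m s) = lmu D L i s := by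
  apply Subtype.ext
  exact (congrArg (LNam D L) (Quot.sound
    ⟨m, s.1, s.2, _, ((D.obj i).2.1 s.1 s.2).choose_spec, rfl,
      _, ((D.obj j).2.1 _ (D.map m s).2).choose_spec, rfl⟩)).symm

/-- The cocone `(sel(D,L), (μ_i))`. -/
noncomputable def lcocone (D : I ⥤ VocCat Name) (L : I → List Name)
    (hvoc : IsVocab (LSel D L)) : Cocone D where
  pt := ⟨LSel D L, hvoc⟩
  ι := { app := fun i => InducedCategory.homMk (TypeCat.ofHom (lmu D L i))
         naturality := fun i j m => by
           refine ConcreteCategory.hom_ext _ _ fun s => ?_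
           exact lmu_natural D L m s }

/-- The underlying function on symbols of the descent map for a competing cocone. -/
noncomputable def gSym (D : I ⥤ VocCat Name) (L : I → List Name) (c' : Cocone D)
    (p : LSym D L) : ↥(c'.pt.1) :=
  c'.ι.app p.1.1 ⟨p.2.choose_spec.choose, p.2.choose_spec.choose_spec.1⟩

lemma gSym_resp (D : I ⥤ VocCat Name) (L : I → List Name) (c' : Cocone D)
    (p q : LSym D L) (h : LRel D L p q) : gSym D L c' p = gSym D L c' q := by
  obtain ⟨m, S, hS, x, hxS, hpx, y, hy, hqy⟩ := h
  obtain ⟨hSp, hxpSp, hpeq⟩ := p.2.choose_spec.choose_spec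
  obtain ⟨hSq, hyqSq, hqeq⟩ := q.2.choose_spec.choose_spec
  have hxp : p.2.choose = x := List.append_cancel_left (hpeq.symm.trans hpx)
  have hyq : q.2.choose = y := List.append_cancel_left (hqeq.symm.trans hqy)
  have hSpeq : p.2.choose_spec.choose = S :=
    vocab_eq_of_mem (D.obj p.1.1).2 hSp hS (hxp ▸ hxpSp) hxS
  have hSqeq : q.2.choose_spec.choose = (D.map m ⟨S, hS⟩ : ↥(D.obj q.1.1).1).1 :=
    vocab_eq_of_mem (D.obj q.1.1).2 hSq (D.map m ⟨S, hS⟩).2 (hyq ▸ hyqSq) hy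
  show c'.ι.app p.1.1 _ = c'.ι.app q.1.1 _
  have h1 : (⟨p.2.choose_spec.choose, hSp⟩ : ↥(D.obj p.1.1).1) = ⟨S, hS⟩ :=
    Subtype.ext hSpeq
  have h2 : (⟨q.2.choose_spec.choose, hSq⟩ : ↥(D.obj q.1.1).1) = D.map m ⟨S, hS⟩ :=
    Subtype.ext hSqeq
  rw [h1, h2]
  exact (ConcreteCategory.congr_hom (c'.w m) (⟨S, hS⟩ : ↥(D.obj p.1.1).1)).symm

/-- A preimage under `LNam` of an element of `sel(D,L)`. -/
noncomputable def lpre (D : I ⥤ VocCat Name) (L : I → List Name)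
    (a : ↥(LSel D L)) : Quot (LRel D L) :=
  (Set.mem_range.mp a.2).choose

lemma lpre_spec (D : I ⥤ VocCat Name) (L : I → List Name) (a : ↥(LSel D L)) :
    LNam D L (lpre D L a) = a.1 :=
  (Set.mem_range.mp a.2).choose_spec

lemma lmu_surj (D : I ⥤ VocCat Name) (L : I → List Name) (a : ↥(LSel D L)) :
    ∃ (i : I) (s : ↥(D.obj i).1), lmu D L i s = a := by
  obtain ⟨A, hA⟩ := a
  obtain ⟨X, rfl⟩ := hA
  obtain ⟨p, rfl⟩ := Quot.exists_rep X
  obtain ⟨x, S, hS, hxS, hpx⟩ := p.2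
  refine ⟨p.1.1, ⟨S, hS⟩, Subtype.ext ?_⟩
  rw [lmu_spec D L p.1.1 hS hxS]
  have heq : lsym D L p.1.1 hS hxS = p := by
    apply Subtype.ext
    show (p.1.1, L p.1.1 ++ x) = p.1
    rw [← hpx]
  rw [heq]

/-- The descent map. -/
noncomputable def ldesc (D : I ⥤ VocCat Name) (L : I → List Name) (c' : Cocone D)
    (a : ↥(LSel D L)) : ↥(c'.pt.1) :=
  Quot.lift (gSym D L c') (gSym_resp D L c') (lpre D L a)

lemma ldesc_fac (D : I ⥤ VocCat Name) (L : I → List Name)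
    (hncf : ∀ X Y : Quot (LRel D L), X ≠ Y → Disjoint (LNam D L X) (LNam D L Y))
    (c' : Cocone D) (i : I) (s : ↥(D.obj i).1) :
    ldesc D L c' (lmu D L i s) = c'.ι.app i s := by
  have hx0 := ((D.obj i).2.1 s.1 s.2).choose_spec
  have hpre : lpre D L (lmu D L i s) =
      Quot.mk (LRel D L) (lsym D L i s.2 hx0) :=
    lnam_inj hncf (lpre_spec D L (lmu D L i s))
  show Quot.lift _ _ (lpre D L (lmu D L i s)) = _
  rw [hpre]
  show gSym D L c' (lsym D L i s.2 hx0) = c'.ι.app i s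
  unfold gSym
  set p := lsym D L i s.2 hx0 with hp
  obtain ⟨hSp, hxpSp, hpeq⟩ := p.2.choose_spec.choose_spec
  have hxp : p.2.choose = ((D.obj i).2.1 s.1 s.2).choose :=
    List.append_cancel_left (hpeq.symm.trans rfl)
  have hSpeq : p.2.choose_spec.choose = s.1 :=
    vocab_eq_of_mem (D.obj i).2 hSp s.2 (hxp ▸ hxpSp) hx0
  have h1 : (⟨p.2.choose_spec.choose, hSp⟩ : ↥(D.obj i).1) = s :=
    Subtype.ext hSpeq
  exact congrArg (ConcreteCategory.hom (c'.ι.app i)) h1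

/-- The colimit structure. -/
noncomputable def lcolimit (D : I ⥤ VocCat Name) (L : I → List Name)
    (hvoc : IsVocab (LSel D L))
    (hncf : ∀ X Y : Quot (LRel D L), X ≠ Y → Disjoint (LNam D L X) (LNam D L Y)) :
    IsColimit (lcocone D L hvoc) where
  desc := fun c' => InducedCategory.homMk (TypeCat.ofHom (ldesc D L c'))
  fac := fun c' i => by
    refine ConcreteCategory.hom_ext _ _ fun s => ?_
    exact ldesc_fac D L hncf c' i s
  uniq := fun c' md h => by
    refine ConcreteCategory.hom_ext _ _ fun a => ?_
    obtain ⟨i, s, rfl⟩ := lmu_surj D L a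
    exact (ConcreteCategory.congr_hom (h i) s).trans (ldesc_fac D L hncf c' i s).symm

end LabeledAux

theorem labeled_colimit_of_vocabularies (D : I ⥤ VocCat Name) (L : I → List Name)
    (hL : ∀ i, (L i).length ≤ 1)
    (hncf : ∀ X Y : Quot (LRel D L), X ≠ Y → Disjoint (LNam D L X) (LNam D L Y)) :
    IsVocab (LSel D L) ∧
      (∀ (i : I) (S : Set (List Name)) (hS : S ∈ (D.obj i).1) (x y : List Name)
        (hx : x ∈ S) (hy : y ∈ S),
        LNam D L (Quot.mk (LRel D L) ⟨(i, L i ++ x), ⟨x, S, hS, hx, rfl⟩⟩) =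
          LNam D L (Quot.mk (LRel D L) ⟨(i, L i ++ y), ⟨y, S, hS, hy, rfl⟩⟩)) ∧
      (∃ c : Cocone D, c.pt.1 = LSel D L ∧
        (∀ (i : I) (S : Set (List Name)) (hS : S ∈ (D.obj i).1) (x : List Name)
          (hx : x ∈ S),
          (c.ι.app i ⟨S, hS⟩ : Set (List Name)) =
            LNam D L (Quot.mk (LRel D L) ⟨(i, L i ++ x), ⟨x, S, hS, hx, rfl⟩⟩)) ∧
        Nonempty (IsColimit c)) := by
  have hvoc : IsVocab (LSel D L) := by
    constructor
    · rintro A ⟨X, rfl⟩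
      exact lnam_nonempty D L X
    · rintro A ⟨X, rfl⟩ B ⟨Y, rfl⟩ hne
      exact hncf X Y (fun h => hne (congrArg (LNam D L) h))
  refine ⟨hvoc, fun i S hS x y hx hy => congrArg (LNam D L) (mk_eq_of_same D L hS hx hy),
    lcocone D L hvoc, rfl, fun i S hS x hx => lmu_spec D L i hS hx,
    ⟨lcolimit D L hvoc hncf⟩⟩
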